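/- With h_n = sup{x ≥ 0 : n·S_-(x) ≥ x} for a positive random variable X with S(x)=P(X>x)>0 for all x, it holds that h_n/n → 0 as n → ∞. -/

import Mathlib

open MeasureTheory ProbabilityTheory Filter

/-- the theoretical Hirsch index satisfies `h n / n → 0`. -/
theorem hirsch_index_div_n_tendsto_zero
    {Ω : Type*} [MeasureSpace Ω] [IsProbabilityMeasure (ℙ : Measure Ω)]
    (X : Ω → ℝ) (hX : Measurable X) (hXpos : ∀ ω, 0 < X ω)
    (S Sm : ℝ → ℝ)
    (hS : ∀ x, S x = (ℙ {ω | x < X ω}).toReal)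
    (hSm : ∀ x, Sm x = (ℙ {ω | x ≤ X ω}).toReal)
    (hSpos : ∀ x, 0 < S x)
    (h : ℕ → ℝ)
    (hh : ∀ n : ℕ, h n = sSup {x : ℝ | 0 ≤ x ∧ x ≤ n * Sm x}) :
    Tendsto (fun n : ℕ => h n / n) atTop (nhds 0) := by
  have hSm_anti : Antitone Sm := by
    intro a b hab
    rw [hSm, hSm]
    exact ENNReal.toReal_mono (measure_ne_top _ _)
      (measure_mono (fun ω hω => le_trans hab hω))
  have hSm_nonneg : ∀ x, 0 ≤ Sm x := fun x => by rw [hSm]; exact ENNReal.toReal_nonneg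
  have hSm_le_one : ∀ x, Sm x ≤ 1 := fun x => by
    rw [hSm]
    calc (ℙ {ω | x ≤ X ω}).toReal ≤ (1 : ENNReal).toReal :=
          ENNReal.toReal_mono ENNReal.one_ne_top prob_le_one
      _ = 1 := by simp
  have hzero : ∀ n : ℕ, (0:ℝ) ∈ {x : ℝ | 0 ≤ x ∧ x ≤ n * Sm x} := fun n =>
    ⟨le_refl 0, mul_nonneg (Nat.cast_nonneg n) (hSm_nonneg 0)⟩
  have hbdd : ∀ n : ℕ, BddAbove {x : ℝ | 0 ≤ x ∧ x ≤ n * Sm x} := fun n =>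
    ⟨n, fun x hx => by nlinarith [hx.1, hx.2, hSm_le_one x, hSm_nonneg x,
      (Nat.cast_nonneg n : (0:ℝ) ≤ n)]⟩
  -- Sm tends to 0 along the naturals
  have hmeas : ∀ k : ℕ, MeasurableSet {ω | (k:ℝ) ≤ X ω} := fun k =>
    hX measurableSet_Ici
  have hanti_sets : Antitone (fun k : ℕ => {ω | (k:ℝ) ≤ X ω}) := by
    intro a b hab ω hω
    exact le_trans (show (a:ℝ) ≤ b by exact_mod_cast hab) hω
  have hiInter : (⋂ k : ℕ, {ω | (k:ℝ) ≤ X ω}) = (∅ : Set Ω) := by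
    ext ω
    simp only [Set.mem_iInter, Set.mem_setOf_eq, Set.mem_empty_iff_false, iff_false, not_forall,
      not_le]
    exact exists_nat_gt (X ω)
  have h1 : Tendsto (fun k : ℕ => ℙ {ω | (k:ℝ) ≤ X ω}) atTop (nhds 0) := by
    have := tendsto_measure_iInter_atTop (μ := (ℙ : Measure Ω))
      (s := fun k : ℕ => {ω | (k:ℝ) ≤ X ω}) (fun k => (hmeas k).nullMeasurableSet) hanti_sets
      ⟨0, measure_ne_top _ _⟩
    rwa [hiInter, measure_empty] at this
  have hSm0 : Tendsto (fun k : ℕ => Sm k) atTop (nhds 0) := by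
    have h2 : Tendsto (fun k : ℕ => (ℙ {ω | (k:ℝ) ≤ X ω}).toReal) atTop (nhds 0) := by
      simpa [Function.comp_def] using (ENNReal.tendsto_toReal (by simp)).comp h1
    simpa only [hSm] using h2
  rw [Metric.tendsto_atTop]
  intro ε hε
  obtain ⟨K, hK⟩ := (hSm0.eventually (gt_mem_nhds (half_pos hε))).exists
  obtain ⟨N, hN⟩ := exists_nat_ge (2 * K / ε)
  refine ⟨max N 1, fun n hn => ?_⟩
  have hn1 : (1:ℝ) ≤ n := by exact_mod_cast le_trans (le_max_right N 1) hn
  have hnN : (N:ℝ) ≤ n := by exact_mod_cast le_trans (le_max_left N 1) hn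
  have hεn : (K:ℝ) ≤ ε/2 * n := by
    rw [div_le_iff₀ hε] at hN
    nlinarith
  have hsup : h n ≤ ε/2 * n := by
    rw [hh]
    apply csSup_le ⟨0, hzero n⟩
    intro x hx
    by_contra hlt
    push_neg at hlt
    have hxK : (K:ℝ) ≤ x := le_trans hεn hlt.le
    have hSmx : Sm x < ε/2 := lt_of_le_of_lt (hSm_anti hxK) hK
    nlinarith [hx.2]
  have hnn : 0 ≤ h n := by rw [hh]; exact le_csSup (hbdd n) (hzero n)
  have hnpos : (0:ℝ) < n := lt_of_lt_of_le one_pos hn1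
  rw [Real.dist_eq, sub_zero, abs_of_nonneg (div_nonneg hnn hnpos.le)]
  rw [div_lt_iff₀ hnpos]
  nlinarith
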